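/- Let p be a prime and let ℤ_(p) denote the localization of ℤ at the prime ideal (p). If M is an injective ℤ_(p)-module, then L_0 M = 0, where L_0 is the zeroth left derived functor of p-adic completion on ℤ_(p)-modules. -/

import Mathlib

open CategoryTheory

universe u

variable (R : Type u) [CommRing R] (I : Ideal R)

theorem AdicCompletion.mapR_smul {M N : Type u} [AddCommGroup M] [Module R M]
    [AddCommGroup N] [Module R N] (f : M →ₗ[R] N) (r : R) (x : AdicCompletion I M) :
    AdicCompletion.map I f (r • x) = r • AdicCompletion.map I f x := by
  ext n
  simp only [AdicCompletion.map_val_apply, AdicCompletion.val_smul]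
  induction (x.val n) using Quotient.inductionOn' with
  | h y =>
    simp [Submodule.Quotient.mk''_eq_mk, ← Submodule.Quotient.mk_smul]

/-- The `I`-adic completion functor on the category of `R`-modules. -/
noncomputable def completionFunctor : ModuleCat.{u} R ⥤ ModuleCat.{u} R where
  obj M := ModuleCat.of R (AdicCompletion I M)
  map {M N} f := ModuleCat.ofHom
    { toFun := AdicCompletion.map I f.hom
      map_add' := fun x y => map_add _ x y
      map_smul' := fun r x => AdicCompletion.mapR_smul R I f.hom r x }
  map_id M := by
    refine ModuleCat.hom_ext (LinearMap.ext fun x => ?_)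
    exact LinearMap.congr_fun (AdicCompletion.map_id I M) x
  map_comp {M N P} f g := by
    refine ModuleCat.hom_ext (LinearMap.ext fun x => ?_)
    exact (AdicCompletion.map_comp_apply I f.hom g.hom x).symm

instance : (completionFunctor R I).Additive where
  map_add {M N f g} := by
    refine ModuleCat.hom_ext (LinearMap.ext fun (x : AdicCompletion I M) => ?_)
    refine AdicCompletion.ext (fun n => ?_)
    show (AdicCompletion.map I (f + g).hom x).val n
      = (AdicCompletion.map I f.hom x + AdicCompletion.map I g.hom x).val n
    simp only [AdicCompletion.map_val_apply, AdicCompletion.val_add]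
    obtain ⟨y, hy⟩ := Submodule.Quotient.mk_surjective _ (x.val n)
    erw [← hy]
    simp [Submodule.Quotient.mk_add]
    erw [← hy]
    simp

/-- The natural transformation from the identity to the completion functor. -/
noncomputable def completionUnit : 𝟭 (ModuleCat.{u} R) ⟶ completionFunctor R I where
  app M := ModuleCat.ofHom (AdicCompletion.of I M)
  naturality {M N} f := by
    ext x
    rfl

/-- The `s`-th left derived functor of `I`-adic completion. -/
noncomputable def derivedCompletion (s : ℕ) : ModuleCat.{u} R ⥤ ModuleCat.{u} R :=
  (completionFunctor R I).leftDerived s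

/-- The canonical natural map `M ⟶ L₀ M`. -/
noncomputable def toDerivedCompletionZero : 𝟭 (ModuleCat.{u} R) ⟶ derivedCompletion R I 0 :=
  (Functor.leftDerivedZeroIsoSelf (𝟭 (ModuleCat.{u} R))).inv ≫
    NatTrans.leftDerived (completionUnit R I) 0

instance span_int_p_isPrime (p : ℕ) [hp : Fact p.Prime] :
    (Ideal.span {(p : ℤ)}).IsPrime :=
  (Ideal.span_singleton_prime (by exact_mod_cast hp.out.ne_zero)).mpr
    (Nat.prime_iff_prime_int.mp hp.out)

/-- The localization `ℤ_(p)` of `ℤ` at the prime ideal `(p)`. -/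
abbrev ZLoc (p : ℕ) [Fact p.Prime] : Type :=
  Localization.AtPrime (Ideal.span {(p : ℤ)})

namespace L0Aux

variable {R' : Type u} [CommRing R'] {I' : Ideal R'}
variable {A B : Type u} [AddCommGroup A] [Module R' A] [AddCommGroup B] [Module R' B]

theorem step (f : A →ₗ[R'] B) (h : ∀ x : B, ∃ a, x - f a ∈ (I' • ⊤ : Submodule R' B))
    (n : ℕ) (c : B) (hc : c ∈ (I' ^ n • ⊤ : Submodule R' B)) :
    ∃ δ : A, δ ∈ (I' ^ n • ⊤ : Submodule R' A) ∧
      c - f δ ∈ (I' ^ (n + 1) • ⊤ : Submodule R' B) := by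
  refine Submodule.smul_induction_on hc ?_ ?_
  · intro r hr w _
    obtain ⟨u, hu⟩ := h w
    refine ⟨r • u, Submodule.smul_mem_smul hr trivial, ?_⟩
    have e : r • w - f (r • u) = r • (w - f u) := by rw [map_smul, smul_sub]
    rw [e, pow_succ, mul_smul]
    exact Submodule.smul_mem_smul hr hu
  · rintro c₁ c₂ ⟨δ₁, hm₁, hd₁⟩ ⟨δ₂, hm₂, hd₂⟩
    refine ⟨δ₁ + δ₂, Submodule.add_mem _ hm₁ hm₂, ?_⟩
    have e : c₁ + c₂ - f (δ₁ + δ₂) = (c₁ - f δ₁) + (c₂ - f δ₂) := by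
      rw [map_add]; abel
    rw [e]
    exact Submodule.add_mem _ hd₁ hd₂

theorem surj (f : A →ₗ[R'] B) (h : ∀ x : B, ∃ a, x - f a ∈ (I' • ⊤ : Submodule R' B)) :
    Function.Surjective (AdicCompletion.map I' f) := by
  intro x
  induction x using AdicCompletion.induction_on with
  | h b =>
  have step' : ∀ n (c : B), ∃ δ : A, c ∈ (I' ^ n • ⊤ : Submodule R' B) →
      δ ∈ (I' ^ n • ⊤ : Submodule R' A) ∧ c - f δ ∈ (I' ^ (n + 1) • ⊤ : Submodule R' B) := by
    intro n c
    by_cases hc : c ∈ (I' ^ n • ⊤ : Submodule R' B)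
    · obtain ⟨δ, h1, h2⟩ := step f h n c hc
      exact ⟨δ, fun _ => ⟨h1, h2⟩⟩
    · exact ⟨0, fun hc' => absurd hc' hc⟩
  choose Δ hΔ using step'
  let a : ℕ → A := fun n => Nat.rec 0 (fun n aₙ => aₙ + Δ n (b (n + 1) - f aₙ)) n
  have haS : ∀ n, a (n + 1) = a n + Δ n (b (n + 1) - f (a n)) := fun n => rfl
  have hinv : ∀ n, b n - f (a n) ∈ (I' ^ n • ⊤ : Submodule R' B) := by
    intro n
    induction n with
    | zero => simp
    | succ n ih =>
      have hb : b n - b (n + 1) ∈ (I' ^ n • ⊤ : Submodule R' B) :=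
        SModEq.sub_mem.mp (b.property (Nat.le_succ n))
      have hcmem : b (n + 1) - f (a n) ∈ (I' ^ n • ⊤ : Submodule R' B) := by
        have e : b (n + 1) - f (a n) = (b n - f (a n)) - (b n - b (n + 1)) := by abel
        rw [e]
        exact Submodule.sub_mem _ ih hb
      obtain ⟨_, hnext⟩ := hΔ n _ hcmem
      have e : b (n + 1) - f (a (n + 1))
          = (b (n + 1) - f (a n)) - f (Δ n (b (n + 1) - f (a n))) := by
        rw [haS n, map_add]; abel
      rw [e]
      exact hnext
  have hcmem : ∀ n, b (n + 1) - f (a n) ∈ (I' ^ n • ⊤ : Submodule R' B) := by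
    intro n
    have hb : b n - b (n + 1) ∈ (I' ^ n • ⊤ : Submodule R' B) :=
      SModEq.sub_mem.mp (b.property (Nat.le_succ n))
    have e : b (n + 1) - f (a n) = (b n - f (a n)) - (b n - b (n + 1)) := by abel
    rw [e]
    exact Submodule.sub_mem _ (hinv n) hb
  have hAC : ∀ n, a n ≡ a (n + 1) [SMOD (I' ^ n • ⊤ : Submodule R' A)] := by
    intro n
    refine SModEq.sub_mem.mpr ?_
    have e : a n - a (n + 1) = -(Δ n (b (n + 1) - f (a n))) := by rw [haS n]; abel
    rw [e]
    exact Submodule.neg_mem _ (hΔ n _ (hcmem n)).1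
  refine ⟨AdicCompletion.mk I' A (AdicCompletion.AdicCauchySequence.mk I' A a hAC), ?_⟩
  rw [AdicCompletion.map_mk]
  refine AdicCompletion.ext fun n => ?_
  simp only [AdicCompletion.mk_apply_coe, Submodule.mkQ_apply]
  rw [Submodule.Quotient.eq]
  have : (AdicCompletion.AdicCauchySequence.map I' f (AdicCompletion.AdicCauchySequence.mk I' A a hAC)) n = f (a n) := rfl
  rw [this]
  have e : f (a n) - b n = -(b n - f (a n)) := by abel
  rw [e]
  exact Submodule.neg_mem _ (hinv n)

end L0Aux

/-- if `M` is an injective `ℤ_(p)`-module then `L₀ M = 0`, where `L₀` is the zeroth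
left derived functor of `p`-adic completion on `ℤ_(p)`-modules. -/
theorem L0_of_injective_isZero (p : ℕ) [Fact p.Prime]
    (M : Type) [AddCommGroup M] [Module (ZLoc p) M]
    (hM : Module.Injective (ZLoc p) M) :
    Limits.IsZero ((derivedCompletion (ZLoc p) (Ideal.span {(p : ZLoc p)}) 0).obj
      (ModuleCat.of (ZLoc p) M)) := by
  classical
  haveI : IsDomain (ZLoc p) := inferInstanceAs (IsDomain (Localization.AtPrime (Ideal.span {(p : ℤ)})))
  have hp0 : (p : ZLoc p) ≠ 0 := by
    have hinj : Function.Injective (algebraMap ℤ (ZLoc p)) :=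
      IsLocalization.injective (M := (Ideal.span {(p : ℤ)}).primeCompl) (ZLoc p)
        (Ideal.primeCompl_le_nonZeroDivisors _)
    intro hc
    have h2 : algebraMap ℤ (ZLoc p) (p : ℤ) = algebraMap ℤ (ZLoc p) 0 := by
      simpa using hc
    have := hinj h2
    exact_mod_cast (Fact.out : p.Prime).ne_zero (by exact_mod_cast this)
  have hdiv : ∀ x : M, ∃ y : M, (p : ZLoc p) • y = x := by
    intro x
    have hfinj : Function.Injective
        ((p : ZLoc p) • (LinearMap.id : ZLoc p →ₗ[ZLoc p] ZLoc p)) := by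
      intro a b hab
      simp only [LinearMap.smul_apply, LinearMap.id_coe, id_eq, smul_eq_mul] at hab
      exact mul_left_cancel₀ hp0 hab
    obtain ⟨g, hg⟩ := hM.out ((p : ZLoc p) • (LinearMap.id : ZLoc p →ₗ[ZLoc p] ZLoc p)) hfinj
      (LinearMap.toSpanSingleton (ZLoc p) M x)
    refine ⟨g 1, ?_⟩
    have h1 := hg 1
    simp only [LinearMap.smul_apply, LinearMap.id_coe, id_eq,
      LinearMap.toSpanSingleton_apply, one_smul] at h1
    rw [map_smul] at h1
    simpa using h1
  let X := ModuleCat.of (ZLoc p) M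
  let P : ProjectiveResolution X := (HasProjectiveResolution.out (Z := X)).some
  refine Limits.IsZero.of_iso ?_
    (P.isoLeftDerivedObj (completionFunctor (ZLoc p) (Ideal.span {(p : ZLoc p)})) 0)
  refine (HomologicalComplex.exactAt_iff_isZero_homology _ 0).mp ?_
  rw [HomologicalComplex.exactAt_iff' _ 1 0 0 (ChainComplex.prev ℕ 0) ChainComplex.next_nat_zero]
  rw [ShortComplex.moduleCat_exact_iff]
  intro x _
  have hεsurj : Function.Surjective (P.π.f 0) :=
    (ModuleCat.epi_iff_surjective (P.π.f 0)).mp inferInstance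
  have hexact := (ShortComplex.moduleCat_exact_iff _).mp P.exact₀
  have hdense : ∀ v : P.complex.X 0, ∃ a,
      v - (P.complex.d 1 0) a ∈
        (Ideal.span {(p : ZLoc p)} • ⊤ : Submodule (ZLoc p) (P.complex.X 0)) := by
    intro v
    obtain ⟨y, hy⟩ := hdiv ((P.π.f 0) v)
    obtain ⟨z, hz⟩ := hεsurj y
    have hker : (P.π.f 0) (v - (p : ZLoc p) • z) = 0 := by
      rw [map_sub, map_smul, hz]
      exact sub_eq_zero.mpr hy.symm
    obtain ⟨a, ha⟩ := hexact _ hker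
    refine ⟨a, ?_⟩
    have e : v - (P.complex.d 1 0) a = (p : ZLoc p) • z := by
      rw [ha]; abel
    rw [e]
    exact Submodule.smul_mem_smul (Submodule.mem_span_singleton_self _) trivial
  have hsurj := L0Aux.surj (I' := Ideal.span {(p : ZLoc p)})
    (P.complex.d 1 0).hom hdense
  obtain ⟨w, hw⟩ := hsurj x
  exact ⟨w, hw⟩
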